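/- Let K be a field of characteristic zero, let n ≥ 3, and let u₁, v̄, w̄ ∈ K⟦z⟧ with constant coefficient u₁(0) ≠ 0. Set u = u₁z, v = v̄·zⁿ, w = w̄·z^{2n−1}, and Δ = 4u³w − u²v² − 18uvw + 4v³ + 27w². If z^{2n+3} divides Δ, then z divides v̄² − 4u₁w̄. -/

import Mathlib

theorem stmt_15 {K : Type*} [Field K] [CharZero K] (n : ℕ) (hn : 3 ≤ n)
    (u₁ vb wb : PowerSeries K)
    (hu₁ : PowerSeries.constantCoeff u₁ ≠ 0)
    (u v w Δ : PowerSeries K)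
    (hu : u = u₁ * PowerSeries.X)
    (hv : v = vb * PowerSeries.X ^ n)
    (hw : w = wb * PowerSeries.X ^ (2 * n - 1))
    (hΔ : Δ = 4 * u ^ 3 * w - u ^ 2 * v ^ 2 - 18 * u * v * w + 4 * v ^ 3 + 27 * w ^ 2)
    (hdvd : (PowerSeries.X : PowerSeries K) ^ (2 * n + 3) ∣ Δ) :
    (PowerSeries.X : PowerSeries K) ∣ (vb ^ 2 - 4 * u₁ * wb) := by
  obtain ⟨m, rfl⟩ : ∃ m, n = m + 3 := ⟨n - 3, by omega⟩
  set X : PowerSeries K := PowerSeries.X with hX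
  obtain ⟨q, hq⟩ := hdvd
  set E : PowerSeries K :=
    u₁ ^ 2 * (4 * u₁ * wb - vb ^ 2) +
      X * ((-18 * u₁ * vb * wb + 4 * vb ^ 3) * X ^ m + 27 * wb ^ 2 * X ^ (2 * m + 1))
    with hE
  have hΔ' : Δ = X ^ (2 * m + 8) * E := by
    have h1 : 2 * (m + 3) - 1 = 2 * m + 5 := by omega
    rw [hΔ, hu, hv, hw, h1, hE]
    ring
  have key : X ^ (2 * m + 8) * E = X ^ (2 * m + 8) * (X * q) := by
    rw [← hΔ', hq]
    have h2 : 2 * (m + 3) + 3 = 2 * m + 8 + 1 := by omega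
    rw [h2, pow_succ, mul_assoc]
  have hEq : E = X * q :=
    mul_left_cancel₀ (pow_ne_zero _ PowerSeries.X_ne_zero) key
  have hc : PowerSeries.constantCoeff E = 0 := by
    rw [hEq, map_mul, PowerSeries.constantCoeff_X, zero_mul]
  rw [hE] at hc
  simp only [hX, map_add, map_mul, map_sub, map_neg, map_pow, map_ofNat,
    PowerSeries.constantCoeff_X, zero_mul, mul_zero, add_zero] at hc
  have h4 : (PowerSeries.constantCoeff u₁) ^ 2 ≠ 0 := pow_ne_zero _ hu₁
  have hc2 : 4 * PowerSeries.constantCoeff u₁ * PowerSeries.constantCoeff wb -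
      (PowerSeries.constantCoeff vb) ^ 2 = 0 := by
    exact (mul_eq_zero.mp hc).resolve_left h4
  rw [PowerSeries.X_dvd_iff]
  simp only [map_sub, map_mul, map_pow, map_ofNat]
  linear_combination -hc2
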